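/- Let ℓ be an odd prime, ζ a primitive ℓ-th root of unity, σ ∈ Gal(ℚ(ζ)/ℚ), and χ the cyclotomic character with ζ^σ = ζ^{χ(σ)}. Then for 1 ≤ r ≤ ℓ − 2 and α ≡ 1 mod (1−ζ): ℒ^r(α^σ) ≡ χ(σ)^r · ℒ^r(α) (mod ℓ). -/

import Mathlib

open PowerSeries

/-- Kummer's differential logarithm: for a polynomial `f ∈ ℤ[X]` (representing
`α = f(ζ)`), `kummerL f r` is the `r`-th derivative of `log f(e^v)` at `v = 0`, computed
formally as `(r−1)! · coeff_{r−1} (g'/g)` where `g = f(e^v) ∈ ℚ⟦v⟧`. -/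
noncomputable def kummerL (f : Polynomial ℤ) (r : ℕ) : ℚ :=
  ((r - 1).factorial : ℚ) *
    PowerSeries.coeff (r - 1)
      (PowerSeries.derivative ℚ (Polynomial.eval₂ (Int.castRingHom (PowerSeries ℚ))
          (PowerSeries.exp ℚ) f) *
        (Polynomial.eval₂ (Int.castRingHom (PowerSeries ℚ)) (PowerSeries.exp ℚ) f)⁻¹)

/-- `x ≡ 0 (mod ℓ)` for a rational number `x`, in the `ℓ`-adic sense. -/
def RatModCong (ℓ : ℕ) (x : ℚ) : Prop :=
  ∃ a b : ℤ, ¬ (ℓ : ℤ) ∣ b ∧ (b : ℚ) * x = (ℓ : ℚ) * a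


section KummerAux
open Polynomial Finset

noncomputable def cH (k : ℕ) (A : PowerSeries ℚ) : ℚ :=
  (k.factorial : ℚ) * PowerSeries.coeff k A

lemma cH_mul (k : ℕ) (A B : PowerSeries ℚ) :
    cH k (A * B) = ∑ i ∈ Finset.range (k + 1),
      (k.choose i : ℚ) * cH i A * cH (k - i) B := by
  rw [cH, PowerSeries.coeff_mul, Finset.Nat.sum_antidiagonal_eq_sum_range_succ_mk,
    Finset.mul_sum]
  refine Finset.sum_congr rfl fun i hi => ?_
  have hik : i ≤ k := Nat.lt_succ_iff.mp (Finset.mem_range.mp hi)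
  rw [cH, cH]
  have hfac : (k.factorial : ℚ)
      = (k.choose i : ℚ) * (i.factorial : ℚ) * ((k - i).factorial : ℚ) := by
    rw_mod_cast [Nat.choose_mul_factorial_mul_factorial hik]
  rw [hfac]; ring

lemma cH_derivative (k : ℕ) (A : PowerSeries ℚ) :
    cH k (PowerSeries.derivative ℚ A) = cH (k + 1) A := by
  rw [cH, cH, PowerSeries.coeff_derivative, Nat.factorial_succ]
  push_cast; ring

lemma cH_sub (k : ℕ) (A B : PowerSeries ℚ) : cH k (A - B) = cH k A - cH k B := by
  simp [cH, mul_sub]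

lemma cH_one (k : ℕ) : cH k (1 : PowerSeries ℚ) = if k = 0 then 1 else 0 := by
  simp [cH, PowerSeries.coeff_one]
  split_ifs with h <;> simp [h]

lemma cH_exp (k : ℕ) : cH k (PowerSeries.exp ℚ) = 1 := by
  simp [cH, PowerSeries.coeff_exp]
  rw [mul_inv_cancel₀]
  exact_mod_cast Nat.factorial_ne_zero k

/-- Hurwitz-integral: all `k! * coeff k` are integers. -/
def ZH (A : PowerSeries ℚ) : Prop := ∀ k, ∃ m : ℤ, cH k A = m

lemma ZH.add {A B} (hA : ZH A) (hB : ZH B) : ZH (A + B) := by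
  intro k
  obtain ⟨a, ha⟩ := hA k; obtain ⟨b, hb⟩ := hB k
  have : cH k (A + B) = cH k A + cH k B := by simp [cH, mul_add]
  exact ⟨a + b, by rw [this, ha, hb]; push_cast; ring⟩

lemma ZH.mul {A B} (hA : ZH A) (hB : ZH B) : ZH (A * B) := by
  intro k
  choose mA hmA using hA
  choose mB hmB using hB
  refine ⟨∑ i ∈ Finset.range (k + 1), (k.choose i : ℤ) * mA i * mB (k - i), ?_⟩
  rw [cH_mul]; push_cast
  exact Finset.sum_congr rfl fun i _ => by rw [hmA, hmB]

lemma ZH.derivative {A} (hA : ZH A) : ZH (PowerSeries.derivative ℚ A) := by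
  intro k; rw [cH_derivative]; exact hA (k + 1)

lemma ZH_exp : ZH (PowerSeries.exp ℚ) := fun k => ⟨1, by rw [cH_exp]; norm_num⟩

lemma ZH_intCast (a : ℤ) : ZH ((a : PowerSeries ℚ)) := by
  intro k
  have : ((a : ℤ) : PowerSeries ℚ) = PowerSeries.C ((a : ℤ) : ℚ) := by
    rw [← map_intCast (PowerSeries.C (R := ℚ))]
  rw [this]
  refine ⟨if k = 0 then a else 0, ?_⟩
  rw [cH, PowerSeries.coeff_C]
  split_ifs with h <;> simp [h]

lemma ZH_E (f : Polynomial ℤ) :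
    ZH (Polynomial.eval₂ (Int.castRingHom (PowerSeries ℚ)) (PowerSeries.exp ℚ) f) := by
  induction f using Polynomial.induction_on with
  | C a => rw [Polynomial.eval₂_C, eq_intCast]; exact ZH_intCast a
  | add p q hp hq => rw [Polynomial.eval₂_add]; exact hp.add hq
  | monomial n a h =>
      rw [pow_succ, ← mul_assoc, Polynomial.eval₂_mul, Polynomial.eval₂_X]
      exact h.mul ZH_exp

section Padic
variable (p : ℕ) [hp : Fact p.Prime]

/-- Hurwitz coefficients are `p`-integral. -/
def HI (A : PowerSeries ℚ) : Prop := ∀ k, ‖((cH k A : ℚ) : ℚ_[p])‖ ≤ 1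

/-- Hurwitz coefficients up to index `N` are divisible by `p`. -/
def HD (N : ℕ) (A : PowerSeries ℚ) : Prop :=
  ∀ k ≤ N, ‖((cH k A : ℚ) : ℚ_[p])‖ ≤ (p : ℝ)⁻¹

lemma norm_intCast_le_one (m : ℤ) : ‖((m : ℚ) : ℚ_[p])‖ ≤ 1 := by
  rw [Rat.cast_intCast]; exact Padic.norm_int_le_one m

lemma norm_intCast_eq_one {m : ℤ} (hm : ¬ (p : ℤ) ∣ m) : ‖((m : ℚ) : ℚ_[p])‖ = 1 := by
  rw [Rat.cast_intCast]
  refine le_antisymm (Padic.norm_int_le_one m) ?_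
  by_contra hlt
  exact hm ((Padic.norm_intCast_lt_one_iff (k := m)).mp (lt_of_not_ge hlt))

lemma norm_intCast_le_inv {m : ℤ} (hm : (p : ℤ) ∣ m) : ‖((m : ℚ) : ℚ_[p])‖ ≤ (p : ℝ)⁻¹ := by
  rw [Rat.cast_intCast]
  have := (Padic.norm_int_le_pow_iff_dvd m 1).mpr (by simpa using hm)
  simpa [zpow_neg] using this

lemma HI_of_ZH {A} (hA : ZH A) : HI p A := by
  intro k
  obtain ⟨m, hm⟩ := hA k
  rw [hm]; exact norm_intCast_le_one p m

lemma HI.mul {A B} (hA : HI p A) (hB : HI p B) : HI p (A * B) := by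
  intro k
  rw [cH_mul]
  push_cast
  refine IsUltrametricDist.norm_sum_le_of_forall_le_of_nonneg zero_le_one fun i _ => ?_
  calc ‖((k.choose i : ℚ) : ℚ_[p]) * ((cH i A : ℚ) : ℚ_[p]) * ((cH (k - i) B : ℚ) : ℚ_[p])‖
      = ‖((k.choose i : ℚ) : ℚ_[p])‖ * ‖((cH i A : ℚ) : ℚ_[p])‖ * ‖((cH (k - i) B : ℚ) : ℚ_[p])‖ := by
        rw [norm_mul, norm_mul]
    _ ≤ 1 * 1 * 1 := by
        have h1 : ‖((k.choose i : ℚ) : ℚ_[p])‖ ≤ 1 := by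
          exact_mod_cast norm_intCast_le_one p (k.choose i)
        exact mul_le_mul (mul_le_mul h1 (hA i) (norm_nonneg _) (by norm_num))
          (hB (k - i)) (norm_nonneg _) (by norm_num)
    _ = 1 := by norm_num

lemma HD.mul {N A B} (hA : HD p N A) (hB : HI p B) : HD p N (A * B) := by
  intro k hk
  rw [cH_mul]
  push_cast
  have hinv : (0:ℝ) ≤ (p : ℝ)⁻¹ := by positivity
  refine IsUltrametricDist.norm_sum_le_of_forall_le_of_nonneg hinv fun i hi => ?_
  have hik : i ≤ k := Nat.lt_succ_iff.mp (Finset.mem_range.mp hi)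
  have h1 : ‖((k.choose i : ℚ) : ℚ_[p])‖ ≤ 1 := by
    exact_mod_cast norm_intCast_le_one p (k.choose i)
  calc ‖((k.choose i : ℚ) : ℚ_[p]) * ((cH i A : ℚ) : ℚ_[p]) * ((cH (k - i) B : ℚ) : ℚ_[p])‖
      = ‖((k.choose i : ℚ) : ℚ_[p])‖ * ‖((cH i A : ℚ) : ℚ_[p])‖ * ‖((cH (k - i) B : ℚ) : ℚ_[p])‖ := by
        rw [norm_mul, norm_mul]
    _ ≤ 1 * (p : ℝ)⁻¹ * 1 :=
        mul_le_mul (mul_le_mul h1 (hA i (le_trans hik hk)) (norm_nonneg _) (by norm_num))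
          (hB (k - i)) (norm_nonneg _) (by positivity)
    _ = (p : ℝ)⁻¹ := by ring

lemma HD.add {N A B} (hA : HD p N A) (hB : HD p N B) : HD p N (A + B) := by
  intro k hk
  have : cH k (A + B) = cH k A + cH k B := by simp [cH, mul_add]
  rw [this]
  push_cast
  exact le_trans (IsUltrametricDist.norm_add_le_max _ _) (max_le (hA k hk) (hB k hk))

lemma ultra_sub (x y : ℚ_[p]) : ‖x - y‖ ≤ max ‖x‖ ‖y‖ := by
  rw [sub_eq_add_neg]
  simpa using IsUltrametricDist.norm_add_le_max x (-y)

lemma HD.sub {N A B} (hA : HD p N A) (hB : HD p N B) : HD p N (A - B) := by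
  intro k hk
  rw [cH_sub]
  push_cast
  exact le_trans (ultra_sub p _ _) (max_le (hA k hk) (hB k hk))

lemma HD.mono {N M A} (hA : HD p N A) (hMN : M ≤ N) : HD p M A :=
  fun k hk => hA k (le_trans hk hMN)

/-- If `A` is Hurwitz `p`-integral with unit constant term, so is `A⁻¹`. -/
lemma HI.inv {A : PowerSeries ℚ} (hA : HI p A) (h0 : ‖((cH 0 A : ℚ) : ℚ_[p])‖ = 1) :
    HI p A⁻¹ := by
  have hc0 : PowerSeries.constantCoeff A ≠ 0 := by
    intro h
    rw [cH, PowerSeries.coeff_zero_eq_constantCoeff, h] at h0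
    simp at h0
  have hmulinv : A * A⁻¹ = 1 := PowerSeries.mul_inv_cancel A hc0
  have hcH0 : cH 0 A ≠ 0 := by
    intro h; rw [h] at h0; simp at h0
  intro k
  induction k using Nat.strong_induction_on with
  | _ k ih =>
    have hkey : cH 0 A * cH k A⁻¹
        = cH k 1 - ∑ i ∈ Finset.range k,
            (k.choose (i + 1) : ℚ) * cH (i + 1) A * cH (k - (i + 1)) A⁻¹ := by
      rw [← hmulinv, cH_mul, Finset.sum_range_succ']
      simp only [Nat.choose_zero_right, Nat.cast_one, one_mul, Nat.sub_zero]
      ring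
    have hnorm : ‖((cH 0 A * cH k A⁻¹ : ℚ) : ℚ_[p])‖ ≤ 1 := by
      rw [hkey]
      push_cast
      refine le_trans (ultra_sub p _ _) (max_le ?_ ?_)
      · rcases Nat.eq_zero_or_pos k with h | h
        · subst h; rw [cH_one]; simp
        · rw [cH_one, if_neg (Nat.pos_iff_ne_zero.mp h)]; simp
      · refine IsUltrametricDist.norm_sum_le_of_forall_le_of_nonneg zero_le_one fun i hi => ?_
        have hlt : k - (i + 1) < k := by
          have := Finset.mem_range.mp hi; omega
        have h1 : ‖((k.choose (i + 1) : ℚ) : ℚ_[p])‖ ≤ 1 := by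
          exact_mod_cast norm_intCast_le_one p (k.choose (i + 1))
        calc ‖((k.choose (i+1) : ℚ) : ℚ_[p]) * ((cH (i+1) A : ℚ) : ℚ_[p]) * ((cH (k-(i+1)) A⁻¹ : ℚ) : ℚ_[p])‖
            = ‖((k.choose (i+1) : ℚ) : ℚ_[p])‖ * ‖((cH (i+1) A : ℚ) : ℚ_[p])‖ *
                ‖((cH (k-(i+1)) A⁻¹ : ℚ) : ℚ_[p])‖ := by rw [norm_mul, norm_mul]
          _ ≤ 1 * 1 * 1 :=
              mul_le_mul (mul_le_mul h1 (hA (i+1)) (norm_nonneg _) (by norm_num))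
                (ih _ hlt) (norm_nonneg _) (by norm_num)
          _ = 1 := by norm_num
    rw [Rat.cast_mul, norm_mul, h0, one_mul] at hnorm
    exact hnorm

end Padic

section NumberTheory
variable (p : ℕ) [hp : Fact p.Prime]

lemma sum_range_pow_dvd {k : ℕ} (hk : k ≤ p - 2) :
    (p : ℤ) ∣ ∑ j ∈ Finset.range p, (j : ℤ) ^ k := by
  haveI : NeZero p := ⟨hp.out.ne_zero⟩
  rw [← ZMod.intCast_zmod_eq_zero_iff_dvd]
  push_cast
  have hsum : ∑ j ∈ Finset.range p, ((j : ZMod p)) ^ k = ∑ x : ZMod p, x ^ k := by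
    refine Finset.sum_bij' (fun j _ => ((j : ZMod p))) (fun x _ => x.val) ?_ ?_ ?_ ?_ ?_
    · intro a _; exact Finset.mem_univ _
    · intro x _; exact Finset.mem_range.mpr (ZMod.val_lt x)
    · intro a ha; exact ZMod.val_cast_of_lt (Finset.mem_range.mp ha)
    · intro x _; exact ZMod.natCast_rightInverse x
    · intro a _; rfl
  rw [hsum]
  have hcard : Fintype.card (ZMod p) = p := ZMod.card p
  refine FiniteField.sum_pow_lt_card_sub_one (ZMod p) k ?_
  rw [hcard]
  have h2 : 2 ≤ p := hp.out.two_le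
  omega

end NumberTheory

section CyclotomicSeries
variable (p : ℕ) [hp : Fact p.Prime]

lemma cH_cyclotomic (k : ℕ) :
    cH k (Polynomial.eval₂ (Int.castRingHom (PowerSeries ℚ)) (PowerSeries.exp ℚ)
      (Polynomial.cyclotomic p ℤ))
    = ((∑ j ∈ Finset.range p, (j : ℤ) ^ k : ℤ) : ℚ) := by
  rw [Polynomial.cyclotomic_prime ℤ p, Polynomial.eval₂_finset_sum]
  have hterm : ∀ j : ℕ, Polynomial.eval₂ (Int.castRingHom (PowerSeries ℚ)) (PowerSeries.exp ℚ)
      ((Polynomial.X : Polynomial ℤ) ^ j) = PowerSeries.rescale ((j : ℕ) : ℚ) (PowerSeries.exp ℚ) := by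
    intro j
    rw [Polynomial.eval₂_X_pow, PowerSeries.exp_pow_eq_rescale_exp]
  have : cH k (∑ j ∈ Finset.range p,
      Polynomial.eval₂ (Int.castRingHom (PowerSeries ℚ)) (PowerSeries.exp ℚ)
        ((Polynomial.X : Polynomial ℤ) ^ j)) = ∑ j ∈ Finset.range p, (j : ℚ) ^ k := by
    rw [cH, map_sum, Finset.mul_sum]
    refine Finset.sum_congr rfl fun j _ => ?_
    rw [hterm j, PowerSeries.coeff_rescale, PowerSeries.coeff_exp]
    have hk0 : (k.factorial : ℚ) ≠ 0 := by exact_mod_cast Nat.factorial_ne_zero k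
    field_simp
    rw [Algebra.algebraMap_self, RingHom.id_apply]; field_simp
  rw [this]
  push_cast
  rfl

lemma HD_cyclotomic :
    HD p (p - 2) (Polynomial.eval₂ (Int.castRingHom (PowerSeries ℚ)) (PowerSeries.exp ℚ)
      (Polynomial.cyclotomic p ℤ)) := by
  intro k hk
  rw [cH_cyclotomic]
  exact norm_intCast_le_inv p (sum_range_pow_dvd p hk)

end CyclotomicSeries

noncomputable def Eh (q : Polynomial ℤ) : PowerSeries ℚ :=
  Polynomial.eval₂ (Int.castRingHom (PowerSeries ℚ)) (PowerSeries.exp ℚ) q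

lemma Eh_constantCoeff (q : Polynomial ℤ) :
    PowerSeries.constantCoeff (Eh q) = ((q.eval 1 : ℤ) : ℚ) := by
  rw [Eh, Polynomial.hom_eval₂]
  have h1 : (PowerSeries.constantCoeff).comp (Int.castRingHom (PowerSeries ℚ))
      = Int.castRingHom ℚ := Subsingleton.elim _ _
  rw [h1, PowerSeries.constantCoeff_exp, Polynomial.eval₂_at_one]
  rfl

lemma cH_zero_Eh (q : Polynomial ℤ) : cH 0 (Eh q) = ((q.eval 1 : ℤ) : ℚ) := by
  rw [cH, PowerSeries.coeff_zero_eq_constantCoeff, Eh_constantCoeff]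
  simp

lemma Eh_add (q r : Polynomial ℤ) : Eh (q + r) = Eh q + Eh r := Polynomial.eval₂_add _ _
lemma Eh_mul (q r : Polynomial ℤ) : Eh (q * r) = Eh q * Eh r := Polynomial.eval₂_mul _ _

/-- `kummerL` re-expressed through `Eh`. -/
noncomputable def kummerL' (f : Polynomial ℤ) (r : ℕ) : ℚ :=
  ((r - 1).factorial : ℚ) *
    PowerSeries.coeff (r - 1)
      (PowerSeries.derivative ℚ (Eh f) * (Eh f)⁻¹)

lemma kummerL'_eq_cH (f : Polynomial ℤ) (r : ℕ) :
    kummerL' f r = cH (r - 1) (PowerSeries.derivative ℚ (Eh f) * (Eh f)⁻¹) := rfl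

/-- The key congruence: adding a multiple of the cyclotomic polynomial changes `ℒ^r`
by a multiple of `p`. -/
lemma key_congruence (p : ℕ) [hp : Fact p.Prime] (g h : Polynomial ℤ)
    (hg1 : ¬ (p : ℤ) ∣ g.eval 1)
    (hf1 : ¬ (p : ℤ) ∣ (g + Polynomial.cyclotomic p ℤ * h).eval 1)
    (r : ℕ) (hr1 : 1 ≤ r) (hr2 : r ≤ p - 2) (hp3 : 3 ≤ p) :
    ‖((kummerL' (g + Polynomial.cyclotomic p ℤ * h) r - kummerL' g r : ℚ) : ℚ_[p])‖
      ≤ (p : ℝ)⁻¹ := by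
  set G := Eh g with hG
  set P := Eh (Polynomial.cyclotomic p ℤ) with hP
  set H := Eh h with hH
  set F := Eh (g + Polynomial.cyclotomic p ℤ * h) with hF
  have hFGPH : F = G + P * H := by rw [hF, Eh_add, Eh_mul]
  -- constant coefficients are p-adic units
  have hcG : PowerSeries.constantCoeff G ≠ 0 := by
    rw [hG, Eh_constantCoeff]
    intro hh
    have h0 : g.eval 1 = 0 := by exact_mod_cast hh
    exact hg1 (h0 ▸ dvd_zero _)
  have hcF : PowerSeries.constantCoeff F ≠ 0 := by
    rw [hF, Eh_constantCoeff]
    intro hh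
    have h0 : (g + Polynomial.cyclotomic p ℤ * h).eval 1 = 0 := by exact_mod_cast hh
    exact hf1 (h0 ▸ dvd_zero _)
  have hGinv : G * G⁻¹ = 1 := PowerSeries.mul_inv_cancel G hcG
  have hFinv : F * F⁻¹ = 1 := PowerSeries.mul_inv_cancel F hcF
  -- the difference of logarithmic derivatives
  set D := PowerSeries.derivative ℚ F * F⁻¹ - PowerSeries.derivative ℚ G * G⁻¹ with hD
  have hstep1 : D = (PowerSeries.derivative ℚ F * G - PowerSeries.derivative ℚ G * F)
      * (F⁻¹ * G⁻¹) := by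
    rw [hD]
    linear_combination (PowerSeries.derivative ℚ G * G⁻¹) * hFinv -
      (PowerSeries.derivative ℚ F * F⁻¹) * hGinv
  have hdF : PowerSeries.derivative ℚ F
      = PowerSeries.derivative ℚ G + (P * PowerSeries.derivative ℚ H
        + H * PowerSeries.derivative ℚ P) := by
    rw [hFGPH, map_add, Derivation.leibniz, smul_eq_mul, smul_eq_mul]
  have hstep2 : PowerSeries.derivative ℚ F * G - PowerSeries.derivative ℚ G * F
      = PowerSeries.derivative ℚ P * (H * G)
        + P * (PowerSeries.derivative ℚ H * G - H * PowerSeries.derivative ℚ G) := by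
    rw [hdF, hFGPH]; ring
  -- Hurwitz integrality facts
  have hZG : ZH G := ZH_E g
  have hZH : ZH H := ZH_E h
  have hHD_P : HD p (p - 2) P := HD_cyclotomic p
  have hHD_dP : HD p (p - 3) (PowerSeries.derivative ℚ P) := by
    intro k hk
    rw [cH_derivative]
    exact hHD_P (k + 1) (by omega)
  have hHI_G : HI p G := HI_of_ZH p hZG
  have hHI_Ginv : HI p G⁻¹ := by
    refine (HI_of_ZH p hZG).inv p ?_
    rw [hG, cH_zero_Eh]
    exact norm_intCast_eq_one p hg1
  have hHI_Finv : HI p F⁻¹ := by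
    have hZF : ZH F := ZH_E _
    refine (HI_of_ZH p hZF).inv p ?_
    rw [hF, cH_zero_Eh]
    exact norm_intCast_eq_one p hf1
  have hHD_D : HD p (p - 3) D := by
    rw [hstep1, hstep2]
    have h1 : HD p (p - 3) (PowerSeries.derivative ℚ P * (H * G)) :=
      hHD_dP.mul p (HI_of_ZH p (hZH.mul hZG))
    have h2 : HD p (p - 3)
        (P * (PowerSeries.derivative ℚ H * G - H * PowerSeries.derivative ℚ G)) := by
      have : ZH (PowerSeries.derivative ℚ H * G - H * PowerSeries.derivative ℚ G) := by
        intro k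
        obtain ⟨a, ha⟩ := (hZH.derivative.mul hZG) k
        obtain ⟨b, hb⟩ := (hZH.mul hZG.derivative) k
        exact ⟨a - b, by rw [cH_sub, ha, hb]; push_cast; ring⟩
      exact (hHD_P.mono p (by omega)).mul p (HI_of_ZH p this)
    exact (h1.add p h2).mul p (hHI_Finv.mul p hHI_Ginv)
  have hdiff : kummerL' (g + Polynomial.cyclotomic p ℤ * h) r - kummerL' g r
      = cH (r - 1) D := by
    rw [kummerL'_eq_cH, kummerL'_eq_cH, hD, cH_sub]
  rw [hdiff]
  exact hHD_D (r - 1) (by omega)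

lemma derivative_rescale (a : ℚ) (A : PowerSeries ℚ) :
    PowerSeries.derivative ℚ (PowerSeries.rescale a A)
      = a • PowerSeries.rescale a (PowerSeries.derivative ℚ A) := by
  ext k
  rw [PowerSeries.coeff_derivative, PowerSeries.coeff_rescale, PowerSeries.coeff_smul,
    PowerSeries.coeff_rescale, PowerSeries.coeff_derivative]
  rw [smul_eq_mul, pow_succ]
  ring

lemma Eh_comp_X_pow (f : Polynomial ℤ) (c : ℕ) :
    Eh (f.comp (Polynomial.X ^ c)) = PowerSeries.rescale ((c : ℕ) : ℚ) (Eh f) := by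
  rw [Eh, Polynomial.eval₂_comp, Polynomial.eval₂_X_pow, PowerSeries.exp_pow_eq_rescale_exp,
    Eh, Polynomial.hom_eval₂]
  congr 1
  exact Subsingleton.elim _ _

lemma rescale_inv (a : ℚ) (A : PowerSeries ℚ) (hA : PowerSeries.constantCoeff A ≠ 0) :
    (PowerSeries.rescale a A)⁻¹ = PowerSeries.rescale a A⁻¹ := by
  have hra : PowerSeries.constantCoeff (PowerSeries.rescale a A) ≠ 0 := by
    rw [← PowerSeries.coeff_zero_eq_constantCoeff, PowerSeries.coeff_rescale]
    simpa [PowerSeries.coeff_zero_eq_constantCoeff] using hA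
  symm
  rw [PowerSeries.eq_inv_iff_mul_eq_one hra]
  rw [← map_mul, PowerSeries.inv_mul_cancel A hA, map_one]

lemma kummerL'_comp_X_pow (f : Polynomial ℤ) (c : ℕ) (hf1 : f.eval 1 ≠ 0)
    (r : ℕ) (hr : 1 ≤ r) :
    kummerL' (f.comp (Polynomial.X ^ c)) r = (c : ℚ) ^ r * kummerL' f r := by
  have hcF : PowerSeries.constantCoeff (Eh f) ≠ 0 := by
    rw [Eh_constantCoeff]
    exact_mod_cast hf1
  rw [kummerL', kummerL', Eh_comp_X_pow, derivative_rescale, rescale_inv _ _ hcF]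
  rw [smul_mul_assoc, ← map_mul]
  rw [PowerSeries.coeff_smul, PowerSeries.coeff_rescale]
  rw [smul_eq_mul]
  have : (c : ℚ) * ((c : ℚ) ^ (r - 1)) = (c : ℚ) ^ r := by
    rw [← pow_succ']
    congr 1
    omega
  linear_combination (((r - 1).factorial : ℚ) *
    (PowerSeries.coeff (r - 1)) (PowerSeries.derivative ℚ (Eh f) * (Eh f)⁻¹)) * this

lemma cyclo_dvd_of_aeval_zero {p : ℕ} [hp : Fact p.Prime] {ζ : ℂ}
    (hζ : IsPrimitiveRoot ζ p) (q : Polynomial ℤ) (hq : Polynomial.aeval ζ q = 0) :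
    Polynomial.cyclotomic p ℤ ∣ q := by
  have hmap : Polynomial.cyclotomic p ℚ ∣ q.map (Int.castRingHom ℚ) := by
    rw [Polynomial.cyclotomic_eq_minpoly_rat hζ hp.out.pos]
    apply minpoly.dvd
    rw [← algebraMap_int_eq, Polynomial.aeval_map_algebraMap]
    exact hq
  rwa [← Polynomial.map_cyclotomic_int p ℚ,
    Polynomial.map_dvd_map _ Int.cast_injective (Polynomial.cyclotomic.monic p ℤ)] at hmap

lemma ratModCong_of_norm_lt (p : ℕ) [hp : Fact p.Prime] (x : ℚ)
    (hx : ‖(x : ℚ_[p])‖ < 1) :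
    ∃ a b : ℤ, ¬ (p : ℤ) ∣ b ∧ (b : ℚ) * x = (p : ℚ) * a := by
  have hp2 : 2 ≤ p := hp.out.two_le
  have hnd1 : ¬ (p : ℤ) ∣ 1 := by
    intro hd
    have := Int.le_of_dvd one_pos hd
    have : (2 : ℤ) ≤ (p : ℤ) := by exact_mod_cast hp2
    omega
  rcases eq_or_ne x 0 with h0 | h0
  · exact ⟨0, 1, hnd1, by simp [h0]⟩
  have hdenq : ((x.den : ℚ)) ≠ 0 := by
    exact_mod_cast x.den_nz
  have hqid : ((x.den : ℤ) : ℚ) * x = (x.num : ℚ) := by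
    push_cast
    rw [mul_comm]
    have hh := Rat.num_div_den x
    rw [div_eq_iff hdenq] at hh
    exact hh.symm
  have hpid : ((x.den : ℤ) : ℚ_[p]) * (x : ℚ_[p]) = ((x.num : ℤ) : ℚ_[p]) := by
    have := congrArg (fun y : ℚ => (y : ℚ_[p])) hqid
    push_cast at this ⊢
    simpa using this
  have hden : ¬ (p : ℤ) ∣ (x.den : ℤ) := by
    intro hd
    have hdnat : p ∣ x.den := by exact_mod_cast hd
    have hnum : ¬ (p : ℤ) ∣ x.num := by
      intro hn
      have h1 : p ∣ x.num.natAbs := by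
        simpa using Int.natAbs_dvd_natAbs.mpr hn
      have h2 : p ∣ Nat.gcd x.num.natAbs x.den := Nat.dvd_gcd h1 hdnat
      rw [x.reduced] at h2
      have := Nat.le_of_dvd one_pos h2
      omega
    have hnormnum : ‖((x.num : ℤ) : ℚ_[p])‖ = 1 := by
      refine le_antisymm (Padic.norm_int_le_one _) ?_
      by_contra hlt
      exact hnum ((Padic.norm_intCast_lt_one_iff (p := p)).mp (lt_of_not_ge hlt))
    have hnormden : ‖((x.den : ℤ) : ℚ_[p])‖ ≤ 1 := Padic.norm_int_le_one _
    have : (1 : ℝ) = ‖((x.den : ℤ) : ℚ_[p])‖ * ‖(x : ℚ_[p])‖ := by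
      rw [← norm_mul, hpid, hnormnum]
    nlinarith [norm_nonneg ((x.den : ℤ) : ℚ_[p]), norm_nonneg (x : ℚ_[p])]
  -- now p ∤ den, so p ∣ num
  have hnormden : ‖((x.den : ℤ) : ℚ_[p])‖ = 1 := by
    refine le_antisymm (Padic.norm_int_le_one _) ?_
    by_contra hlt
    exact hden ((Padic.norm_intCast_lt_one_iff (p := p)).mp (lt_of_not_ge hlt))
  have hnumlt : ‖((x.num : ℤ) : ℚ_[p])‖ < 1 := by
    rw [← hpid, norm_mul, hnormden, one_mul]
    exact hx
  obtain ⟨a, ha⟩ := (Padic.norm_intCast_lt_one_iff (p := p)).mp hnumlt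
  refine ⟨a, (x.den : ℤ), hden, ?_⟩
  rw [hqid, ha]
  push_cast
  ring


end KummerAux

/-- Galois equivariance of Kummer's differential logarithms:
`ℒ^r(α^σ) ≡ χ(σ)^r · ℒ^r(α) (mod ℓ)` for `1 ≤ r ≤ ℓ − 2`, where `σ ∈ Gal(ℚ(ζ)/ℚ)` sends
`ζ` to `ζ^c` (`c = χ(σ)` the cyclotomic character), `α = f(ζ) ≡ 1 mod (1 − ζ)`, and
`α^σ = f(ζ^c) = f'(ζ)`. -/
theorem kummerL_galois_equivariant (ℓ : ℕ) (hℓ : ℓ.Prime) (hodd : ℓ ≠ 2)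
    (ζ : ℂ) (hζ : IsPrimitiveRoot ζ ℓ)
    (c : ℕ) (hc : ¬ ℓ ∣ c)
    (f f' : Polynomial ℤ)
    (hf1 : Polynomial.eval 1 f ≠ 0) (hf'1 : Polynomial.eval 1 f' ≠ 0)
    (hfcong : ∃ u : Polynomial ℤ,
      Polynomial.aeval ζ f - 1 = (1 - ζ) * Polynomial.aeval ζ u)
    (hconj : Polynomial.aeval ζ f' = Polynomial.aeval (ζ ^ c) f)
    (r : ℕ) (hr1 : 1 ≤ r) (hr2 : r ≤ ℓ - 2) :
    RatModCong ℓ (kummerL f' r - (c : ℚ) ^ r * kummerL f r) := by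
  haveI : Fact ℓ.Prime := ⟨hℓ⟩
  have hp3 : 3 ≤ ℓ := by
    have := hℓ.two_le
    omega
  have hkk : ∀ q r', kummerL q r' = kummerL' q r' := fun _ _ => rfl
  set g := f.comp ((Polynomial.X : Polynomial ℤ) ^ c) with hg
  -- ζ-evaluation of g
  have hgζ : Polynomial.aeval ζ g = Polynomial.aeval (ζ ^ c) f := by
    rw [hg, Polynomial.aeval_comp, map_pow, Polynomial.aeval_X]
  -- f' = g + cyclotomic * h
  obtain ⟨h, hfgh⟩ : Polynomial.cyclotomic ℓ ℤ ∣ (f' - g) := by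
    apply cyclo_dvd_of_aeval_zero hζ
    rw [map_sub, hgζ, hconj, sub_self]
  have hf'eq : f' = g + Polynomial.cyclotomic ℓ ℤ * h := by
    rw [← hfgh]; ring
  -- ℓ does not divide f.eval 1
  obtain ⟨u, hu⟩ := hfcong
  obtain ⟨t, ht⟩ : Polynomial.cyclotomic ℓ ℤ ∣ (f - 1 - (1 - Polynomial.X) * u) := by
    apply cyclo_dvd_of_aeval_zero hζ
    rw [map_sub, map_sub, map_mul, map_sub, map_one, Polynomial.aeval_X, sub_eq_zero, ← hu]
  have heval_t := congrArg (Polynomial.eval 1) ht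
  rw [Polynomial.eval_sub, Polynomial.eval_sub, Polynomial.eval_mul, Polynomial.eval_sub,
    Polynomial.eval_one, Polynomial.eval_X, Polynomial.eval_mul,
    Polynomial.eval_one_cyclotomic_prime] at heval_t
  have hfe : ¬ (ℓ : ℤ) ∣ f.eval 1 := by
    intro hd
    have : (ℓ : ℤ) ∣ 1 := by
      have h1 : f.eval 1 - 1 = (ℓ : ℤ) * t.eval 1 := by linarith [heval_t]
      obtain ⟨m, hm⟩ := hd
      exact ⟨m - t.eval 1, by linarith [h1]⟩
    have := Int.le_of_dvd one_pos this
    have h2 : (3 : ℤ) ≤ (ℓ : ℤ) := by exact_mod_cast hp3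
    omega
  have hge : g.eval 1 = f.eval 1 := by
    rw [hg, Polynomial.eval_comp, Polynomial.eval_pow, Polynomial.eval_X, one_pow]
  have hgd : ¬ (ℓ : ℤ) ∣ g.eval 1 := by rwa [hge]
  have hf'd : ¬ (ℓ : ℤ) ∣ (g + Polynomial.cyclotomic ℓ ℤ * h).eval 1 := by
    rw [← hf'eq]
    intro hd
    apply hgd
    have heq := congrArg (Polynomial.eval 1) hf'eq
    rw [Polynomial.eval_add, Polynomial.eval_mul, Polynomial.eval_one_cyclotomic_prime] at heq
    obtain ⟨m, hm⟩ := hd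
    exact ⟨m - h.eval 1, by rw [mul_sub]; linarith [heq, hm]⟩
  -- the key congruence
  have hkey := key_congruence ℓ g h hgd hf'd r hr1 hr2 hp3
  -- exact scaling
  have hscale : kummerL' g r = (c : ℚ) ^ r * kummerL' f r :=
    kummerL'_comp_X_pow f c hf1 r hr1
  have hx : kummerL f' r - (c : ℚ) ^ r * kummerL f r
      = kummerL' (g + Polynomial.cyclotomic ℓ ℤ * h) r - kummerL' g r := by
    rw [hkk, hkk, ← hf'eq, hscale]
  rw [RatModCong, hx]
  apply ratModCong_of_norm_lt
  refine lt_of_le_of_lt hkey ?_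
  rw [inv_lt_one_iff₀]
  right
  have : (1 : ℕ) < ℓ := by omega
  exact_mod_cast this
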